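/- For a finite-dimensional vector space W with a pairing ⟨·,·⟩ : W ⊗ W → K, the Hamiltonian flow Ham(a) = ⟨a, ·⟩ : T(W) → T(W) of any element a ∈ |T(W)| is a K-linear derivation of the tensor algebra T(W). -/

import Mathlib

/-!
STATEMENT 3: For a finite-dimensional vector space `W` with a pairing
`⟨·,·⟩ : W ⊗ W → K`, the Hamiltonian flow `Ham(a) = ⟨a,·⟩ : T(W) → T(W)` of an
element `a ∈ |T(W)|` is a `K`-linear derivation of the tensor algebra `T(W)`.

Since everything is `K`-linear in `a`, and derivations form a subspace, it
suffices to treat the class of a single word `a = |u_1 ⋯ u_r|`.  The operator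
`Ham(a)` is the `K`-linear map `D` determined on words by composing (i.e.
multiplying) the two tensor factors of the extended pairing:
`D(w_1⋯w_s) = Σ_{i,j} ⟨u_i, w_j⟩ · w_1⋯w_{j−1} u_{i+1}⋯u_r u_1⋯u_{i−1} w_{j+1}⋯w_s`.
The conclusion is that `D` satisfies the Leibniz rule.
-/

open TensorAlgebra in
/-- The product in `T(W)` of the word `l = [w_1, …, w_s]`. -/
noncomputable def wordProd {K W : Type*} [Field K] [AddCommGroup W] [Module K W]
    (l : List W) : TensorAlgebra K W :=
  (l.map (TensorAlgebra.ι K)).prod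

/-- `Ham(|u|)` applied to the word `w`:
`Σ_{i,j} ⟨u_i, w_j⟩ · (w_1⋯w_{j−1}u_{i+1}⋯u_r) · (u_1⋯u_{i−1}w_{j+1}⋯w_s)`. -/
noncomputable def hamApply {K W : Type*} [Field K] [AddCommGroup W] [Module K W]
    (p : W →ₗ[K] W →ₗ[K] K) (u w : List W) : TensorAlgebra K W :=
  ∑ i ∈ Finset.range u.length, ∑ j ∈ Finset.range w.length,
    p (u.getD i 0) (w.getD j 0) •
      wordProd (w.take j ++ u.drop (i + 1) ++ u.take i ++ w.drop (j + 1))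

lemma wordProd_append {K W : Type*} [Field K] [AddCommGroup W] [Module K W]
    (a b : List W) : wordProd (K := K) (a ++ b) = wordProd a * wordProd b := by
  simp [wordProd]

lemma hamApply_append {K W : Type*} [Field K] [AddCommGroup W] [Module K W]
    (p : W →ₗ[K] W →ₗ[K] K) (u v w : List W) :
    hamApply p u (v ++ w)
      = hamApply p u v * wordProd w + wordProd v * hamApply p u w := by
  unfold hamApply
  rw [Finset.sum_mul, Finset.mul_sum, ← Finset.sum_add_distrib]
  refine Finset.sum_congr rfl fun i _ => ?_
  rw [List.length_append, Finset.sum_range_add, Finset.sum_mul, Finset.mul_sum]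
  congr 1
  · refine Finset.sum_congr rfl fun j hj => ?_
    rw [Finset.mem_range] at hj
    rw [List.getD_append _ _ _ _ hj, List.take_append_of_le_length hj.le,
      List.drop_append_of_le_length hj,
      smul_mul_assoc]
    congr 1
    rw [← wordProd_append]
    congr 1
    simp [List.append_assoc]
  · refine Finset.sum_congr rfl fun j hj => ?_
    rw [List.getD_append_right _ _ _ _ (Nat.le_add_right _ _),
      Nat.add_sub_cancel_left, List.take_append,
      show v.length + j + 1 = v.length + (j + 1) by omega, List.drop_append,
      mul_smul_comm]
    congr 1
    rw [← wordProd_append]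
    congr 1
    simp [List.append_assoc, List.take_of_length_le (Nat.le_add_right v.length j),
      List.drop_of_length_le (Nat.le_add_right v.length (j + 1))]

theorem ham_is_derivation
    (K W : Type*) [Field K] [CharZero K] [AddCommGroup W] [Module K W]
    [FiniteDimensional K W]
    (p : W →ₗ[K] W →ₗ[K] K)
    (u : List W)
    (D : TensorAlgebra K W →ₗ[K] TensorAlgebra K W)
    (hD : ∀ w : List W, D (wordProd w) = hamApply p u w)
    (x y : TensorAlgebra K W) :
    D (x * y) = D x * y + x * D y := by
  -- key identity on words
  have key : ∀ v w : List W,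
      D (wordProd v * wordProd w)
        = D (wordProd v) * wordProd w + wordProd v * D (wordProd w) := by
    intro v w
    rw [← wordProd_append, hD, hD, hD, hamApply_append]
  -- every element lies in the span of word products
  have hspan : ∀ z : TensorAlgebra K W,
      z ∈ Submodule.span K (Set.range (wordProd (K := K) (W := W))) := by
    intro z
    induction z using TensorAlgebra.induction with
    | algebraMap r =>
      have : (algebraMap K (TensorAlgebra K W)) r = r • wordProd ([] : List W) := by
        simp [wordProd, Algebra.smul_def]
      rw [this]
      exact Submodule.smul_mem _ _ (Submodule.subset_span ⟨[], rfl⟩)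
    | ι x => exact Submodule.subset_span ⟨[x], by simp [wordProd]⟩
    | mul a b ha hb =>
      refine Submodule.span_induction
        (fun a' ⟨la, hla⟩ => ?_) ?_ (fun s t _ _ hs ht => ?_) (fun c s _ hs => ?_) ha
      · refine Submodule.span_induction
          (fun b' ⟨lb, hlb⟩ => ?_) ?_ (fun s t _ _ hs ht => ?_) (fun c s _ hs => ?_) hb
        · exact Submodule.subset_span ⟨la ++ lb, by rw [wordProd_append, hla, hlb]⟩
        · simp
        · rw [mul_add]; exact Submodule.add_mem _ hs ht
        · rw [mul_smul_comm]; exact Submodule.smul_mem _ _ hs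
      · simp
      · rw [add_mul]; exact Submodule.add_mem _ hs ht
      · rw [smul_mul_assoc]; exact Submodule.smul_mem _ _ hs
    | add a b ha hb => exact Submodule.add_mem _ ha hb
  -- extend bilinearly
  refine Submodule.span_induction (p := fun x _ => D (x * y) = D x * y + x * D y)
    ?_ ?_ ?_ ?_ (hspan x)
  · rintro x' ⟨v, rfl⟩
    refine Submodule.span_induction
      (p := fun y _ => D (wordProd v * y) = D (wordProd v) * y + wordProd v * D y)
      ?_ ?_ ?_ ?_ (hspan y)
    · rintro y' ⟨w, rfl⟩
      exact key v w
    · simp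
    · intro s t _ _ hs ht
      rw [mul_add, map_add, hs, ht, map_add]; noncomm_ring
    · intro c s _ hs
      rw [mul_smul_comm, map_smul, hs, map_smul]
      simp [smul_add, mul_smul_comm, smul_mul_assoc]
  · simp
  · intro s t _ _ hs ht
    rw [add_mul, map_add, hs, ht, map_add]; noncomm_ring
  · intro c s _ hs
    rw [smul_mul_assoc, map_smul, hs, map_smul]
    simp [smul_add, mul_smul_comm, smul_mul_assoc]
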